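/- Let R be a strict partial order (irreflexive and transitive relation) on a set A. Then the following are equivalent: (1) R is well-founded and A has no infinite totally unordered subset under R; (2) every strict linear extension of R on A is a well ordering of A (i.e., every strict total order L on A with R ⊆ L is well-founded). -/

import Mathlib

/-- Any strict partial order has a strict linear extension. -/
lemma exists_strict_linear_extension {A : Type*} (Q : A → A → Prop)
    (hirr : ∀ x : A, ¬ Q x x) (htrans : Transitive Q) :
    ∃ L : A → A → Prop, (∀ x y : A, Q x y → L x y) ∧ (∀ x : A, ¬ L x x) ∧
      Transitive L ∧ (∀ x y : A, L x y ∨ x = y ∨ L y x) := by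
  classical
  let r : A → A → Prop := fun x y => Q x y ∨ x = y
  haveI : IsPartialOrder A r := by
    refine { refl := fun x => Or.inr rfl, trans := ?_, antisymm := ?_ }
    · intro x y z hxy hyz
      rcases hxy with h1 | h1
      · rcases hyz with h2 | h2
        · exact Or.inl (htrans h1 h2)
        · exact Or.inl (h2 ▸ h1)
      · exact h1 ▸ hyz
    · intro x y hxy hyx
      rcases hxy with h1 | h1
      · rcases hyx with h2 | h2
        · exact absurd (htrans h1 h2) (hirr x)
        · exact h2.symm
      · exact h1
  obtain ⟨s, hlin, hrs⟩ := extend_partialOrder r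
  refine ⟨fun x y => s x y ∧ x ≠ y, ?_, ?_, ?_, ?_⟩
  · intro x y hQ
    refine ⟨hrs _ _ (Or.inl hQ), ?_⟩
    rintro rfl; exact hirr x hQ
  · intro x hx; exact hx.2 rfl
  · rintro x y z ⟨hxy, hne1⟩ ⟨hyz, hne2⟩
    refine ⟨hlin.trans _ _ _ hxy hyz, ?_⟩
    rintro rfl
    exact hne1 (hlin.antisymm _ _ hxy hyz)
  · intro x y
    by_cases h : x = y
    · exact Or.inr (Or.inl h)
    · rcases hlin.total x y with hs | hs
      · exact Or.inl ⟨hs, h⟩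
      · exact Or.inr (Or.inr ⟨hs, Ne.symm h⟩)

/-- For a strict partial order `R` on `A`: `R` is well-founded with no infinite antichain
iff every strict linear extension of `R` is a well ordering (well-founded strict total order). -/
theorem pwo_no_infinite_antichain_iff_every_linear_extension_well_ordered
    {A : Type*} (R : A → A → Prop) (hirr : ∀ x : A, ¬ R x x) (htrans : Transitive R) :
    (WellFounded R ∧
        ¬ ∃ B : Set A, B.Infinite ∧ ∀ x ∈ B, ∀ y ∈ B, x ≠ y → ¬ R x y ∧ ¬ R y x) ↔
      ∀ L : A → A → Prop, (∀ x y : A, R x y → L x y) →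
        (∀ x : A, ¬ L x x) → Transitive L → (∀ x y : A, L x y ∨ x = y ∨ L y x) →
        WellFounded L := by
  classical
  constructor
  · rintro ⟨hwf, hac⟩ L hsub hLirr hLtrans _
    haveI : IsIrrefl A L := ⟨hLirr⟩
    haveI : IsTrans A L := ⟨fun a b c h1 h2 => hLtrans h1 h2⟩
    haveI : IsStrictOrder A L := { }
    by_contra hnw
    rw [RelEmbedding.wellFounded_iff_isEmpty, not_isEmpty_iff] at hnw
    obtain ⟨f⟩ := hnw
    set g : ℕ → A := fun k => f k with hg
    have hdesc : ∀ {m n : ℕ}, m < n → L (g n) (g m) := fun {m n} h => f.map_rel_iff.2 h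
    -- earlier elements are never `R`-below later ones
    have hnoinc : ∀ {m n : ℕ}, m < n → ¬ R (g m) (g n) := by
      intro m n h hR
      exact hLirr _ (hLtrans (hsub _ _ hR) (hdesc h))
    have ginj : Function.Injective g := f.injective
    -- pick minimal elements along tails
    have key : ∀ N : ℕ, ∃ m, N ≤ m ∧ ∀ k, N ≤ k → ¬ R (g k) (g m) := by
      intro N
      obtain ⟨x, hxmem, hxmin⟩ := hwf.has_min (g '' Set.Ici N) ⟨g N, ⟨N, le_refl N, rfl⟩⟩
      obtain ⟨m, hm, rfl⟩ := hxmem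
      exact ⟨m, hm, fun k hk hR => hxmin (g k) ⟨k, hk, rfl⟩ hR⟩
    let n : ℕ → ℕ := fun k => Nat.rec (key 0).choose (fun _ prev => (key (prev + 1)).choose) k
    have hspec : ∀ k, (n k) + 1 ≤ n (k + 1) ∧
        ∀ j, (n k) + 1 ≤ j → ¬ R (g j) (g (n (k + 1))) := by
      intro k
      exact ⟨(key ((n k) + 1)).choose_spec.1, (key ((n k) + 1)).choose_spec.2⟩
    have hmono : StrictMono n := strictMono_nat_of_lt_succ fun k => (hspec k).1
    have hmin : ∀ j k : ℕ, j < k → ¬ R (g (n k)) (g (n j)) := by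
      intro j k hjk
      cases j with
      | zero => exact (key 0).choose_spec.2 _ (Nat.zero_le _)
      | succ i =>
          exact (hspec i).2 _ (le_trans (hspec i).1 (hmono.monotone (le_of_lt hjk)))
    refine hac ⟨Set.range (g ∘ n), ?_, ?_⟩
    · exact Set.infinite_range_of_injective (ginj.comp hmono.injective)
    · rintro x ⟨j, rfl⟩ y ⟨k, rfl⟩ hne
      have hjk : j ≠ k := by rintro rfl; exact hne rfl
      rcases lt_or_gt_of_ne hjk with h | h
      · exact ⟨hnoinc (hmono h), hmin j k h⟩
      · exact ⟨fun hR => (hmin k j h) hR, hnoinc (hmono h)⟩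
  · intro hall
    constructor
    · obtain ⟨L, hsub, hLirr, hLtrans, hLtot⟩ := exists_strict_linear_extension R hirr htrans
      have hwfL := hall L hsub hLirr hLtrans hLtot
      exact Subrelation.wf (fun {x y} h => hsub x y h) hwfL
    · rintro ⟨B, hBinf, hB⟩
      let f := hBinf.natEmbedding
      let e : ℕ → A := fun k => (f k : A)
      have einj : Function.Injective e := fun a b h => f.injective (Subtype.ext h)
      have emem : ∀ k, e k ∈ B := fun k => (f k).2
      have hanti : ∀ m n : ℕ, m ≠ n → ¬ R (e m) (e n) := by
        intro m n hmn
        exact (hB _ (emem m) _ (emem n) (fun h => hmn (einj h))).1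
      -- the extended strict partial order forcing `e` to be descending
      let W : A → A → Prop := fun x y => R x y ∨
        ∃ m n : ℕ, n < m ∧ (x = e m ∨ R x (e m)) ∧ (y = e n ∨ R (e n) y)
      have helper : ∀ {m n : ℕ} {y : A},
          (y = e n ∨ R (e n) y) → (y = e m ∨ R y (e m)) → n = m := by
        intro m n y h1 h2
        rcases h1 with rfl | h1
        · rcases h2 with h2 | h2
          · exact einj h2
          · by_cases h : n = m
            · exact absurd (h ▸ h2) (hirr _)
            · exact absurd h2 (hanti n m h)
        · rcases h2 with rfl | h2
          · by_cases h : n = m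
            · exact absurd (h ▸ h1) (hirr _)
            · exact absurd h1 (hanti n m h)
          · have := htrans h1 h2
            by_cases h : n = m
            · exact absurd (h ▸ this) (hirr _)
            · exact absurd this (hanti n m h)
      have hWirr : ∀ x, ¬ W x x := by
        rintro x (h | ⟨m, n, hnm, hx1, hx2⟩)
        · exact hirr x h
        · exact absurd (helper hx2 hx1) (Nat.ne_of_lt hnm)
      have hWtrans : Transitive W := by
        rintro x y z (hxy | ⟨m, n, hnm, hx, hy⟩) hyz
        · rcases hyz with hyz | ⟨m, n, hnm, hy, hz⟩
          · exact Or.inl (htrans hxy hyz)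
          · refine Or.inr ⟨m, n, hnm, Or.inr ?_, hz⟩
            rcases hy with rfl | hy
            · exact hxy
            · exact htrans hxy hy
        · rcases hyz with hyz | ⟨m', n', hnm', hy', hz⟩
          · refine Or.inr ⟨m, n, hnm, hx, Or.inr ?_⟩
            rcases hy with rfl | hy
            · exact hyz
            · exact htrans hy hyz
          · have hEq : n = m' := helper hy hy'
            exact Or.inr ⟨m, n', lt_trans (hEq ▸ hnm') hnm, hx, hz⟩
      obtain ⟨L, hsub, hLirr, hLtrans, hLtot⟩ := exists_strict_linear_extension W hWirr hWtrans
      have hRL : ∀ x y, R x y → L x y := fun x y h => hsub x y (Or.inl h)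
      have hwfL := hall L hRL hLirr hLtrans hLtot
      haveI : IsIrrefl A L := ⟨hLirr⟩
      haveI : IsTrans A L := ⟨fun a b c h1 h2 => hLtrans h1 h2⟩
      haveI : IsStrictOrder A L := { }
      have hdesc : ∀ k : ℕ, L (e (k + 1)) (e k) := by
        intro k
        exact hsub _ _ (Or.inr ⟨k + 1, k, Nat.lt_succ_self k, Or.inl rfl, Or.inl rfl⟩)
      exact RelEmbedding.not_wellFounded (RelEmbedding.natGT e hdesc) hwfL
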